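/- Let k ≥ 1 be an integer and let T be a balanced tree on 2k or 2k+1 vertices. Let G be a T̂-free graph on n ≥ 2 vertices with minimum degree δ(G) ≥ n/2. Then the maximum degree of G satisfies Δ(G) ≤ n/2 + 2k. -/

import Mathlib

/-- The suspension `Ĥ` of a graph `H`: a new vertex (`none`) joined to all of `H`. -/
def suspension {V : Type*} (H : SimpleGraph V) : SimpleGraph (Option V) :=
  SimpleGraph.fromRel (fun x y => x = none ∨ ∃ a b, x = some a ∧ y = some b ∧ H.Adj a b)

open SimpleGraph

lemma boundary_edge {V : Type} [DecidableEq V] {T : SimpleGraph V} {s : Finset V}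
    {a b : V} (w : T.Walk a b) (ha : a ∈ s) (hb : b ∉ s) :
    ∃ u ∈ s, ∃ v, v ∉ s ∧ T.Adj u v := by
  induction w with
  | nil => exact absurd ha hb
  | @cons x y z h' p' ih =>
    by_cases hy : y ∈ s
    · exact ih hy hb
    · exact ⟨x, ha, y, hy, h'⟩

lemma unique_nbr {V : Type} [DecidableEq V] {T : SimpleGraph V} (hac : T.IsAcyclic)
    {s : Finset V} {v u1 u2 : V} (hv : v ∉ s) (h1 : u1 ∈ s) (h2 : u2 ∈ s)
    (a1 : T.Adj v u1) (a2 : T.Adj v u2)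
    (hconn : ∀ a ∈ s, ∀ b ∈ s, ∃ w : T.Walk a b, ∀ x ∈ w.support, x ∈ s) :
    u1 = u2 := by
  by_contra hne
  obtain ⟨w, hw⟩ := hconn u1 h1 u2 h2
  set p := w.toPath with hp
  have hsupp : ∀ x ∈ (p : T.Walk u1 u2).support, x ∈ s := fun x hx =>
    hw x (SimpleGraph.Walk.support_toPath_subset w hx)
  have hvp : v ∉ (p : T.Walk u1 u2).support := fun h => hv (hsupp v h)
  have q2path : ((p : T.Walk u1 u2).cons a1).IsPath := p.2.cons hvp
  have heq := hac.path_unique (SimpleGraph.Path.singleton a2) ⟨_, q2path⟩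
  have hlen : ((p : T.Walk u1 u2).cons a1).length = 1 := by
    have := congrArg (fun q : T.Path v u2 => (q : T.Walk v u2).length) heq
    simpa [SimpleGraph.Path.singleton] using this.symm
  simp only [SimpleGraph.Walk.length_cons, Nat.add_left_cancel_iff] at hlen
  have hz : (p : T.Walk u1 u2).length = 0 := by omega
  exact hne (SimpleGraph.Walk.eq_of_length_eq_zero hz)

/-- Greedy tree-embedding lemma. -/
lemma tree_embed {V : Type} [Fintype V] [DecidableEq V] {T : SimpleGraph V}
    (htree : T.IsTree) {n : ℕ} (G : SimpleGraph (Fin n)) (S : Set (Fin n))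
    (hS : ∀ u ∈ S, Fintype.card V ≤ (G.neighborSet u ∩ S).ncard)
    (hne : S.Nonempty) :
    ∃ f : V → Fin n, Function.Injective f ∧ (∀ x, f x ∈ S) ∧
      ∀ a b, T.Adj a b → G.Adj (f a) (f b) := by
  classical
  have hconnT := htree.isConnected
  have hac := htree.IsAcyclic
  -- invariant
  set Inv : Finset V → (V → Fin n) → Prop := fun s f =>
    Set.InjOn f s ∧ (∀ x ∈ s, f x ∈ S) ∧
    (∀ a ∈ s, ∀ b ∈ s, T.Adj a b → G.Adj (f a) (f b)) ∧
    (∀ a ∈ s, ∀ b ∈ s, ∃ w : T.Walk a b, ∀ x ∈ w.support, x ∈ s) with hInv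
  have key : ∀ m : ℕ, ∀ s : Finset V, sᶜ.card = m → s.Nonempty → ∀ f, Inv s f →
      ∃ g, Inv Finset.univ g := by
    intro m
    induction m with
    | zero =>
      intro s hs hsne f hf
      have : s = Finset.univ := by
        rwa [Finset.card_eq_zero, Finset.compl_eq_empty_iff] at hs
      exact ⟨f, this ▸ hf⟩
    | succ m ih =>
      intro s hs hsne f hf
      obtain ⟨b, hb⟩ : sᶜ.Nonempty := Finset.card_pos.mp (by omega)
      have hb' : b ∉ s := Finset.mem_compl.mp hb
      obtain ⟨a, ha⟩ := hsne
      obtain ⟨w⟩ := hconnT.preconnected a b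
      obtain ⟨u, hu, v, hv, hadj⟩ := boundary_edge w ha hb'
      obtain ⟨hinj, hmem, hG, hconn⟩ := hf
      -- pick a fresh image
      have hcard1 : (f '' (s : Set V)).ncard ≤ s.card := by
        have := Set.ncard_image_le (f := f) (s := (s : Set V)) (Set.toFinite _)
        simpa using this
      have hcard2 : s.card + 1 ≤ Fintype.card V := by
        have := Finset.card_compl s (α := V)
        omega
      have hfu : f u ∈ S := hmem u hu
      have hlt : (f '' (s : Set V)).ncard < (G.neighborSet (f u) ∩ S).ncard := by
        have := hS (f u) hfu
        omega
      obtain ⟨wv, hwv1, hwv2⟩ :=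
        Set.exists_mem_notMem_of_ncard_lt_ncard hlt (Set.toFinite _)
      obtain ⟨hwvN, hwvS⟩ := hwv1
      set g := Function.update f v wv with hg
      have hgs : ∀ x ∈ s, g x = f x := by
        intro x hx
        refine Function.update_of_ne ?_ _ _
        rintro rfl; exact hv hx
      have hunique : ∀ b ∈ s, T.Adj v b → b = u := fun b hbs hab =>
        unique_nbr hac hv hbs hu hab hadj.symm hconn
      have hgv : g v = wv := Function.update_self _ _ _
      have hInv' : Inv (insert v s) g := by
        refine ⟨?_, ?_, ?_, ?_⟩
        · intro x hx y hy hxy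
          simp only [Finset.coe_insert, Set.mem_insert_iff, Finset.mem_coe] at hx hy
          rcases hx with hx | hx <;> rcases hy with hy | hy
          · rw [hx, hy]
          · exfalso
            rw [hx, hgv, hgs y hy] at hxy
            exact hwv2 ⟨y, hy, hxy.symm⟩
          · exfalso
            rw [hy, hgv, hgs x hx] at hxy
            exact hwv2 ⟨x, hx, hxy⟩
          · rw [hgs x hx, hgs y hy] at hxy
            exact hinj hx hy hxy
        · intro x hx
          rcases Finset.mem_insert.mp hx with hx | hx
          · rw [hx, hgv]; exact hwvS
          · rw [hgs x hx]; exact hmem x hx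
        · intro x hx y hy hxy
          rcases Finset.mem_insert.mp hx with hx | hx <;>
            rcases Finset.mem_insert.mp hy with hy | hy
          · exfalso; rw [hx, hy] at hxy; exact T.irrefl hxy
          · have hyu : y = u := hunique y hy (hx ▸ hxy)
            rw [hx, hyu, hgv, hgs u hu]
            exact hwvN.symm
          · have hxu : x = u := hunique x hx (hy ▸ hxy.symm)
            rw [hy, hxu, hgv, hgs u hu]
            exact hwvN
          · rw [hgs x hx, hgs y hy]
            exact hG x hx y hy hxy
        · intro x hx y hy
          have hext : ∀ z ∈ s, ∃ w : T.Walk z v, ∀ t ∈ w.support, t ∈ insert v s := by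
            intro z hz
            obtain ⟨w0, hw0⟩ := hconn z hz u hu
            refine ⟨w0.concat hadj, ?_⟩
            intro t ht
            rw [SimpleGraph.Walk.support_concat,
              List.mem_append] at ht
            rcases ht with ht | ht
            · exact Finset.mem_insert_of_mem (hw0 t ht)
            · rw [List.mem_singleton] at ht
              rw [ht]; exact Finset.mem_insert_self _ _
          rcases Finset.mem_insert.mp hx with hx1 | hx1 <;>
            rcases Finset.mem_insert.mp hy with hy1 | hy1
          · rw [hx1, hy1]; exact ⟨SimpleGraph.Walk.nil, by simp⟩
          · obtain ⟨w0, hw0⟩ := hext y hy1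
            rw [hx1]
            exact ⟨w0.reverse, by simpa [SimpleGraph.Walk.support_reverse] using hw0⟩
          · rw [hy1]; exact hext x hx1
          · obtain ⟨w0, hw0⟩ := hconn x hx1 y hy1
            exact ⟨w0, fun t ht => Finset.mem_insert_of_mem (hw0 t ht)⟩
      have hcompl : (insert v s)ᶜ.card = m := by
        have h1 : (insert v s).card = s.card + 1 := Finset.card_insert_of_notMem hv
        have := Finset.card_compl (insert v s) (α := V)
        have := Finset.card_compl s (α := V)
        have hle := Finset.card_le_univ (insert v s)
        omega
      exact ih (insert v s) hcompl ⟨v, Finset.mem_insert_self _ _⟩ g hInv'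
  -- anchor
  have hVne : Nonempty V := hconnT.nonempty
  obtain ⟨r⟩ := hVne
  obtain ⟨x0, hx0⟩ := hne
  obtain ⟨g, hg⟩ := key ({r} : Finset V)ᶜ.card {r} rfl ⟨r, Finset.mem_singleton_self r⟩
    (fun _ => x0) ⟨by
      intro a ha b hb _
      simp only [Finset.coe_singleton, Set.mem_singleton_iff] at ha hb
      rw [ha, hb], by
      intro x hx; exact hx0, by
      intro a ha b hb hab
      rw [Finset.mem_singleton] at ha hb
      subst ha; subst hb; exact absurd hab (T.irrefl), by
      intro a ha b hb
      rw [Finset.mem_singleton] at ha hb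
      subst ha; subst hb
      exact ⟨SimpleGraph.Walk.nil, by simp⟩⟩
  obtain ⟨hinj, hmem, hG, _⟩ := hg
  exact ⟨g, fun x y h => hinj (Finset.mem_coe.mpr (Finset.mem_univ x))
      (Finset.mem_coe.mpr (Finset.mem_univ y)) h,
    fun x => hmem x (Finset.mem_univ x),
    fun a b hab => hG a (Finset.mem_univ a) b (Finset.mem_univ b) hab⟩

theorem stmt11 (k : ℕ) (hk : 1 ≤ k)
    {V : Type} [Fintype V] [DecidableEq V] (T : SimpleGraph V)
    (htree : T.IsTree)
    (hcard : Fintype.card V = 2 * k ∨ Fintype.card V = 2 * k + 1)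
    (A : Finset V) (hA : A.card = k)
    (hAind : ∀ x ∈ A, ∀ y ∈ A, ¬ T.Adj x y)
    (hAcind : ∀ x ∈ Aᶜ, ∀ y ∈ Aᶜ, ¬ T.Adj x y)
    (n : ℕ) (hn : 2 ≤ n)
    (G : SimpleGraph (Fin n))
    (hfree : ¬ ∃ f : suspension T →g G, Function.Injective f)
    (hmindeg : ∀ v : Fin n, n ≤ 2 * (G.neighborSet v).ncard) :
    ∀ v : Fin n, 2 * (G.neighborSet v).ncard ≤ n + 4 * k := by
  intro v
  by_contra hbig
  push_neg at hbig
  set S : Set (Fin n) := G.neighborSet v with hSdef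
  have hSne : S.Nonempty := by
    rw [← Set.ncard_pos (Set.toFinite _)]
    omega
  have hVle : Fintype.card V ≤ 2 * k + 1 := by rcases hcard with h | h <;> omega
  have hS : ∀ u ∈ S, Fintype.card V ≤ (G.neighborSet u ∩ S).ncard := by
    intro u hu
    have h1 : (G.neighborSet u ∩ S).ncard + (G.neighborSet u ∪ S).ncard
        = (G.neighborSet u).ncard + S.ncard :=
      Set.ncard_inter_add_ncard_union _ _ (Set.toFinite _) (Set.toFinite _)
    have h2 : (G.neighborSet u ∪ S).ncard ≤ n := by
      have := Set.ncard_le_ncard (Set.subset_univ (G.neighborSet u ∪ S))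
        (Set.toFinite _)
      simpa [Set.ncard_univ] using this
    have h3 := hmindeg u
    omega
  obtain ⟨f, hfinj, hfS, hfadj⟩ := tree_embed htree G S hS hSne
  apply hfree
  have hvf : ∀ a : V, v ≠ f a := by
    intro a h
    have : f a ∈ G.neighborSet v := hfS a
    rw [← h] at this
    exact G.irrefl this
  refine ⟨⟨fun o => Option.elim o v f, ?_⟩, ?_⟩
  · intro a b hab
    obtain ⟨hne, hr⟩ := hab
    match a, b with
    | none, none => exact absurd rfl hne
    | none, some b => exact hfS b
    | some a, none => exact (hfS a).symm
    | some a, some b =>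
      simp only [Option.elim]
      rcases hr with h | h
      · rcases h with h | ⟨a', b', ha', hb', hadj⟩
        · exact absurd h (by simp)
        · rw [Option.some.injEq] at ha' hb'
          exact hfadj a b (ha' ▸ hb' ▸ hadj)
      · rcases h with h | ⟨b', a', hb', ha', hadj⟩
        · exact absurd h (by simp)
        · rw [Option.some.injEq] at ha' hb'
          exact (hfadj b a (hb' ▸ ha' ▸ hadj)).symm
  · intro a b hab
    match a, b with
    | none, none => rfl
    | none, some b => exact absurd hab (hvf b)
    | some a, none => exact absurd hab.symm (hvf a)
    | some a, some b => exact congrArg some (hfinj hab)
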